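/- Let m and p be natural numbers with m > p + 4, let X be a real m×p matrix of rank p, let D_1,…,D_m be positive reals, fix i ∈ {1,…,m}, let y ∈ ℝ^m, and let f : (0,∞) → ℝ be a measurable function with f(A) ≤ 0 for all A > 0. For A > 0 set V(A) = diag(A+D_1,…,A+D_m), M(A) = Xᵀ V(A)^{−1} X (which is positive definite, hence invertible), and P(A) = V(A)^{−1} − V(A)^{−1} X M(A)^{−1} Xᵀ V(A)^{−1}. Then ∫_0^∞ t₂(A)·(A+D_i)²·A·exp(f(A))·det(V(A))^{−1/2}·det(M(A))^{−1/2}·exp(−(1/2)·yᵀ P(A) y) dA < ∞. (This is Theorem 3 of the paper: the matching prior π_i(A) ∝ tr[V^{−2}](A+D_i)²·A·e^{f(A)} yields a proper posterior under the residual maximum likelihood whenever m > p + 4.) -/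

import Mathlib

open Finset Matrix MeasureTheory


lemma conjT_real {k l : Type*} (A : Matrix k l ℝ) : Aᴴ = Aᵀ := by
  ext i j; simp [Matrix.conjTranspose_apply]

lemma one_le_det_one_add {n : ℕ} {S : Matrix (Fin n) (Fin n) ℝ} (hS : S.PosSemidef) :
    1 ≤ (1 + S).det := by
  have h : S.IsHermitian := hS.isHermitian
  set U : Matrix (Fin n) (Fin n) ℝ := (h.eigenvectorUnitary : Matrix (Fin n) (Fin n) ℝ) with hU
  have hU1 : U * star U = 1 := Matrix.mem_unitaryGroup_iff.mp h.eigenvectorUnitary.2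
  have key : (1 : Matrix (Fin n) (Fin n) ℝ) + S =
      U * (1 + diagonal (RCLike.ofReal ∘ h.eigenvalues)) * star U := by
    rw [Matrix.mul_add, Matrix.mul_one, Matrix.add_mul, hU1]
    congr 1
    exact h.spectral_theorem
  have hdetU : U.det * (star U).det = 1 := by rw [← Matrix.det_mul, hU1, Matrix.det_one]
  have hdet : (1 + S).det
      = ((1 + diagonal (RCLike.ofReal ∘ h.eigenvalues) : Matrix (Fin n) (Fin n) ℝ)).det := by
    rw [key, Matrix.det_mul, Matrix.det_mul, mul_right_comm, hdetU, one_mul]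
  rw [hdet]
  have : (1 : Matrix (Fin n) (Fin n) ℝ) + diagonal (RCLike.ofReal ∘ h.eigenvalues)
      = diagonal (fun i => 1 + h.eigenvalues i) := by
    rw [← Matrix.diagonal_one, Matrix.diagonal_add]
    congr 1
  rw [this, Matrix.det_diagonal]
  calc (1:ℝ) = ∏ _i : Fin n, 1 := by simp
  _ ≤ ∏ i, (1 + h.eigenvalues i) := by
      refine Finset.prod_le_prod (fun i _ => zero_le_one) fun i _ => ?_
      have := hS.eigenvalues_nonneg i
      linarith

open scoped MatrixOrder in
lemma det_le_det_add {n : ℕ} {N Δ : Matrix (Fin n) (Fin n) ℝ}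
    (hN : N.PosDef) (hΔ : Δ.PosSemidef) : N.det ≤ (N + Δ).det := by
  set T := CFC.sqrt N with hT
  have hTpsd : T.PosSemidef := nonneg_iff_posSemidef.mp (CFC.sqrt_nonneg N)
  have hTT : T * T = N := CFC.sqrt_mul_sqrt_self N hN.posSemidef.nonneg
  have hdetT : T.det * T.det = N.det := by rw [← Matrix.det_mul, hTT]
  have hdT : IsUnit T.det := by
    refine isUnit_iff_ne_zero.mpr fun h0 => ?_
    rw [h0, mul_zero] at hdetT
    exact hN.det_pos.ne' hdetT.symm
  have hTinv : T * T⁻¹ = 1 := Matrix.mul_nonsing_inv T hdT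
  have hinvT : T⁻¹ * T = 1 := Matrix.nonsing_inv_mul T hdT
  have hThermInv : (T⁻¹)ᴴ = T⁻¹ := by
    rw [conjT_real, Matrix.transpose_nonsing_inv]
    rw [show Tᵀ = T from by rw [← conjT_real]; exact hTpsd.isHermitian]
  have hS : (T⁻¹ * Δ * T⁻¹).PosSemidef := by
    have := hΔ.conjTranspose_mul_mul_same (B := T⁻¹)
    rwa [hThermInv] at this
  have hcancel : T * (T⁻¹ * Δ * T⁻¹) * T = Δ := by
    rw [show T * (T⁻¹ * Δ * T⁻¹) = (T * T⁻¹) * Δ * T⁻¹ from by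
      simp only [Matrix.mul_assoc], hTinv, Matrix.one_mul, Matrix.mul_assoc, hinvT,
      Matrix.mul_one]
  have key : N + Δ = T * (1 + T⁻¹ * Δ * T⁻¹) * T := by
    rw [Matrix.mul_add, Matrix.mul_one, Matrix.add_mul, hTT, hcancel]
  calc N.det = N.det * 1 := (mul_one _).symm
  _ ≤ N.det * (1 + T⁻¹ * Δ * T⁻¹).det :=
      mul_le_mul_of_nonneg_left (one_le_det_one_add hS) hN.det_pos.le
  _ = (N + Δ).det := by
      rw [key, Matrix.det_mul, Matrix.det_mul, mul_right_comm, hdetT, mul_comm]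

lemma mulVec_ne_zero_of_rank {m p : ℕ} {X : Matrix (Fin m) (Fin p) ℝ} (hX : X.rank = p) :
    ∀ v : Fin p → ℝ, v ≠ 0 → X *ᵥ v ≠ 0 := by
  have hrn := LinearMap.finrank_range_add_finrank_ker X.mulVecLin
  rw [show Module.finrank ℝ (Fin p → ℝ) = p by simp] at hrn
  have hx' : Module.finrank ℝ (LinearMap.range X.mulVecLin) = p := hX
  have hker : Module.finrank ℝ (LinearMap.ker X.mulVecLin) = 0 := by omega
  have hbot : LinearMap.ker X.mulVecLin = ⊥ := Submodule.finrank_eq_zero.mp hker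
  intro v hv h0
  exact hv (LinearMap.ker_eq_bot.mp hbot
    (by simpa [Matrix.mulVecLin_apply] using h0 : X.mulVecLin v = X.mulVecLin 0))

lemma factor_tdm {m p : ℕ} (X : Matrix (Fin m) (Fin p) ℝ) {w : Fin m → ℝ} (hw : ∀ u, 0 ≤ w u) :
    Xᵀ * diagonal w * X =
      (diagonal (fun u => Real.sqrt (w u)) * X)ᴴ * (diagonal (fun u => Real.sqrt (w u)) * X) := by
  have hss : diagonal (fun u => Real.sqrt (w u)) * diagonal (fun u => Real.sqrt (w u))
      = diagonal w := by
    rw [Matrix.diagonal_mul_diagonal]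
    exact congrArg diagonal (funext fun u => Real.mul_self_sqrt (hw u))
  rw [conjT_real, Matrix.transpose_mul, Matrix.diagonal_transpose]
  simp only [Matrix.mul_assoc]
  rw [← Matrix.mul_assoc (diagonal _) (diagonal _), hss]

lemma psd_tdm {m p : ℕ} (X : Matrix (Fin m) (Fin p) ℝ) {w : Fin m → ℝ} (hw : ∀ u, 0 ≤ w u) :
    (Xᵀ * diagonal w * X).PosSemidef := by
  rw [factor_tdm X hw]
  exact Matrix.posSemidef_conjTranspose_mul_self _

lemma posDef_tdm {m p : ℕ} {X : Matrix (Fin m) (Fin p) ℝ}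
    (hX : ∀ v : Fin p → ℝ, v ≠ 0 → X *ᵥ v ≠ 0)
    {w : Fin m → ℝ} (hw : ∀ u, 0 < w u) : (Xᵀ * diagonal w * X).PosDef := by
  refine Matrix.PosDef.of_dotProduct_mulVec_pos (psd_tdm X fun u => (hw u).le).isHermitian fun v hv => ?_
  rw [factor_tdm X fun u => (hw u).le]
  set C := diagonal (fun u => Real.sqrt (w u)) * X with hC
  rw [show (Cᴴ * C) *ᵥ v = Cᴴ *ᵥ (C *ᵥ v) from (Matrix.mulVec_mulVec _ _ _).symm,
    dotProduct_mulVec, Matrix.vecMul_conjTranspose, star_star]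
  refine dotProduct_star_self_pos_iff.mpr ?_
  rw [hC, ← Matrix.mulVec_mulVec]
  intro h0
  refine hX v hv (funext fun u => ?_)
  have := congrFun h0 u
  rw [Matrix.mulVec_diagonal] at this
  have hs : Real.sqrt (w u) ≠ 0 := (Real.sqrt_pos.mpr (hw u)).ne'
  simpa [hs] using this

lemma measurable_entry_mul {a b c : ℕ} {F : ℝ → Matrix (Fin a) (Fin b) ℝ}
    {G : ℝ → Matrix (Fin b) (Fin c) ℝ}
    (hF : ∀ i j, Measurable fun A => F A i j) (hG : ∀ i j, Measurable fun A => G A i j) :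
    ∀ i j, Measurable fun A => (F A * G A) i j := by
  intro i j
  simp only [Matrix.mul_apply]
  exact Finset.measurable_sum _ fun u _ => (hF i u).mul (hG u j)

lemma measurable_det' {k : ℕ} {F : ℝ → Matrix (Fin k) (Fin k) ℝ}
    (hF : ∀ i j, Measurable fun A => F A i j) :
    Measurable fun A => (F A).det := by
  simp only [Matrix.det_apply']
  exact Finset.measurable_sum _ fun σ _ =>
    measurable_const.mul (Finset.measurable_prod _ fun j _ => hF _ _)

lemma measurable_adjugate' {k : ℕ} {F : ℝ → Matrix (Fin k) (Fin k) ℝ}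
    (hF : ∀ i j, Measurable fun A => F A i j) :
    ∀ i j, Measurable fun A => (F A).adjugate i j := by
  intro i j
  simp only [Matrix.adjugate_apply]
  refine measurable_det' fun i' j' => ?_
  by_cases h : i' = j
  · simp [Matrix.updateRow_apply, h]
  · simpa [Matrix.updateRow_apply, h] using hF i' j'

lemma mp_collapse_eq (x K xd : ℝ) (m q : ℕ) (hx : 0 < x) (hK : 0 ≤ K) :
    ((m:ℝ) * (x^2)⁻¹) * ((K*x)^2) * x * 1 * ((x^m) ^ (-(1:ℝ)/2))
      * ((K*x)^((q:ℝ)/2) * xd) * 1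
    = ((m:ℝ) * K^2 * (K^((q:ℝ)/2) * xd)) * x ^ (-(((m:ℝ) - q - 2)/2)) := by
  have e1 : ((x^m : ℝ)) ^ (-(1:ℝ)/2) = x ^ (-(m:ℝ)/2) := by
    rw [← Real.rpow_natCast x m, ← Real.rpow_mul hx.le]
    congr 1
    ring
  have e2 : (K*x) ^ ((q:ℝ)/2) = K^((q:ℝ)/2) * x^((q:ℝ)/2) := Real.mul_rpow hK hx.le
  have e3 : ((x^2 : ℝ))⁻¹ = x ^ (-(2:ℝ)) := by
    rw [← Real.rpow_natCast x 2, ← Real.rpow_neg hx.le]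
    norm_num
  rw [e1, e2, e3, mul_pow]
  rw [show ((m:ℝ) * x ^ (-(2:ℝ))) * (K^2 * x^2) * x * 1 * (x ^ (-(m:ℝ)/2))
      * (K^((q:ℝ)/2) * x^((q:ℝ)/2) * xd) * 1
      = ((m:ℝ) * K^2 * (K^((q:ℝ)/2) * xd))
        * ((x^2 * x) * (x ^ (-(2:ℝ)) * (x ^ (-(m:ℝ)/2) * x^((q:ℝ)/2)))) from by ring]
  congr 1
  have e5 : (x:ℝ)^2 * x = x ^ ((3:ℕ):ℝ) := by
    rw [Real.rpow_natCast]
    ring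
  rw [e5, ← Real.rpow_add hx, ← Real.rpow_add hx, ← Real.rpow_add hx]
  congr 1
  push_cast
  ring

/-- Theorem 3 of the paper. The matching prior
`tr[V⁻²]·(A+Dᵢ)²·A·e^{f(A)}` yields a proper posterior under the residual
(REML) likelihood whenever `m > p + 4`. -/
theorem matching_prior_propriety
    (m p : ℕ) (hm : m > p + 4)
    (X : Matrix (Fin m) (Fin p) ℝ) (hX : X.rank = p)
    (D : Fin m → ℝ) (hD : ∀ u, 0 < D u) (i : Fin m)
    (y : Fin m → ℝ)
    (f : ℝ → ℝ) (hfmeas : Measurable f) (hf : ∀ A : ℝ, 0 < A → f A ≤ 0)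
    (V : ℝ → Matrix (Fin m) (Fin m) ℝ)
    (hV : ∀ A : ℝ, V A = Matrix.diagonal (fun j => A + D j))
    (M : ℝ → Matrix (Fin p) (Fin p) ℝ)
    (hM : ∀ A : ℝ, M A = Xᵀ * (V A)⁻¹ * X)
    (P : ℝ → Matrix (Fin m) (Fin m) ℝ)
    (hP : ∀ A : ℝ, P A = (V A)⁻¹ - (V A)⁻¹ * X * (M A)⁻¹ * Xᵀ * (V A)⁻¹) :
    IntegrableOn
      (fun A : ℝ =>
        (∑ u : Fin m, ((A + D u) ^ 2)⁻¹) * (A + D i) ^ 2 * A * Real.exp (f A)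
          * ((V A).det) ^ (-(1 : ℝ) / 2) * ((M A).det) ^ (-(1 : ℝ) / 2)
          * Real.exp (-(1 / 2) * (y ⬝ᵥ (P A).mulVec y)))
      (Set.Ioi (0 : ℝ)) := by
  classical
  have hne : (Finset.univ : Finset (Fin m)).Nonempty := ⟨i, Finset.mem_univ i⟩
  set dmin : ℝ := Finset.univ.inf' hne D with hdmin_def
  set DM : ℝ := Finset.univ.sup' hne D with hDM_def
  have hdmin_pos : 0 < dmin := by
    rw [hdmin_def, Finset.lt_inf'_iff]
    exact fun u _ => hD u
  have hdmin_le : ∀ u, dmin ≤ D u := fun u => Finset.inf'_le _ (Finset.mem_univ u)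
  have hDM_ge : ∀ u, D u ≤ DM := fun u => Finset.le_sup' _ (Finset.mem_univ u)
  have hdDM : dmin ≤ DM := le_trans (hdmin_le i) (hDM_ge i)
  have hDMpos : 0 < DM := lt_of_lt_of_le hdmin_pos hdDM
  set K : ℝ := DM / dmin with hK_def
  have hKpos : 0 < K := div_pos hDMpos hdmin_pos
  have hK1 : 1 ≤ K := (one_le_div hdmin_pos).mpr hdDM
  have hKbound : ∀ A : ℝ, 0 < A → A + DM ≤ K * (A + dmin) := by
    intro A hA
    have hKd : K * dmin = DM := div_mul_cancel₀ _ hdmin_pos.ne'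
    nlinarith [hK1, hA]
  have hXinj := mulVec_ne_zero_of_rank hX
  have hXtX : (Xᵀ * X).PosDef := by
    have h0 := posDef_tdm hXinj (w := fun _ : Fin m => (1:ℝ)) (fun _ => one_pos)
    rwa [Matrix.diagonal_one, Matrix.mul_one] at h0
  set xdet : ℝ := (Xᵀ * X).det with hxdet_def
  have hxdet : 0 < xdet := hXtX.det_pos
  -- explicit surrogate functions
  set w : ℝ → Fin m → ℝ := fun A j => (A + D j)⁻¹ with hw_def
  set M' : ℝ → Matrix (Fin p) (Fin p) ℝ := fun A => Xᵀ * diagonal (w A) * X with hM'_def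
  set Mi : ℝ → Matrix (Fin p) (Fin p) ℝ := fun A => (M' A).det⁻¹ • (M' A).adjugate with hMi_def
  set P' : ℝ → Matrix (Fin m) (Fin m) ℝ :=
    fun A => diagonal (w A) - diagonal (w A) * X * Mi A * Xᵀ * diagonal (w A) with hP'_def
  set g : ℝ → ℝ := fun A =>
    (∑ u : Fin m, ((A + D u) ^ 2)⁻¹) * (A + D i) ^ 2 * A * Real.exp (f A)
      * (∏ u : Fin m, (A + D u)) ^ (-(1:ℝ)/2) * ((M' A).det) ^ (-(1:ℝ)/2)
      * Real.exp (-(1/2) * (y ⬝ᵥ (P' A).mulVec y)) with hg_def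
  -- pointwise facts on Ioi 0
  have hpos : ∀ A : ℝ, 0 < A → ∀ u, 0 < A + D u := fun A hA u => by linarith [hD u]
  have hVinv : ∀ A : ℝ, 0 < A → (V A)⁻¹ = diagonal (w A) := by
    intro A hA
    apply Matrix.inv_eq_right_inv
    rw [hV A, Matrix.diagonal_mul_diagonal, ← Matrix.diagonal_one]
    exact congrArg diagonal (funext fun j => mul_inv_cancel₀ (hpos A hA j).ne')
  have hMeq : ∀ A : ℝ, 0 < A → M A = M' A := fun A hA => by
    rw [hM A, hVinv A hA]
  have hMpd : ∀ A : ℝ, 0 < A → (M' A).PosDef := fun A hA =>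
    posDef_tdm hXinj (fun u => inv_pos.mpr (hpos A hA u))
  have hMdetpos : ∀ A : ℝ, 0 < A → 0 < (M' A).det := fun A hA => (hMpd A hA).det_pos
  have hMi_inv : ∀ A : ℝ, 0 < A → Mi A = (M' A)⁻¹ := by
    intro A hA
    rw [Matrix.inv_def, Ring.inverse_eq_inv]
  have hMinv_eq : ∀ A : ℝ, 0 < A → (M A)⁻¹ = Mi A := fun A hA => by
    rw [hMeq A hA, hMi_inv A hA]
  have hPeq : ∀ A : ℝ, 0 < A → P A = P' A := fun A hA => by
    rw [hP A, hVinv A hA, hMinv_eq A hA]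
  -- determinant lower bound
  have hdetM_ge : ∀ A : ℝ, 0 < A → ((A+DM)⁻¹)^p * xdet ≤ (M' A).det := by
    intro A hA
    have hADM : 0 < A + DM := by linarith
    have hc : 0 < (A + DM)⁻¹ := inv_pos.mpr hADM
    have hsplit : M' A = Xᵀ * diagonal (fun _ : Fin m => (A+DM)⁻¹) * X
        + Xᵀ * diagonal (fun j => w A j - (A+DM)⁻¹) * X := by
      rw [← Matrix.add_mul, ← Matrix.mul_add, Matrix.diagonal_add]
      show M' A = Xᵀ * diagonal (fun j => (A+DM)⁻¹ + (w A j - (A+DM)⁻¹)) * X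
      simp
      rfl
    have hN : (Xᵀ * diagonal (fun _ : Fin m => (A+DM)⁻¹) * X).PosDef :=
      posDef_tdm hXinj (fun _ => hc)
    have hDel : (Xᵀ * diagonal (fun j => w A j - (A+DM)⁻¹) * X).PosSemidef := by
      refine psd_tdm X fun u => sub_nonneg.mpr ?_
      refine inv_anti₀ (hpos A hA u) ?_
      linarith [hDM_ge u]
    have h1 : (Xᵀ * diagonal (fun _ : Fin m => (A+DM)⁻¹) * X).det ≤ (M' A).det := by
      rw [hsplit]
      exact det_le_det_add hN hDel
    refine le_trans (le_of_eq ?_) h1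
    have hdiagc : diagonal (fun _ : Fin m => (A+DM)⁻¹)
        = ((A+DM)⁻¹) • (1 : Matrix (Fin m) (Fin m) ℝ) := by
      ext a b
      by_cases hab : a = b <;> simp [Matrix.diagonal_apply, hab, Matrix.one_apply]
    rw [hdiagc, Matrix.mul_smul, Matrix.mul_one, Matrix.smul_mul, Matrix.det_smul]
    simp [hxdet_def, mul_comm]
  -- positive semidefiniteness of P'
  have hPsd : ∀ A : ℝ, 0 < A → 0 ≤ y ⬝ᵥ (P' A).mulVec y := by
    intro A hA
    set s : Fin m → ℝ := fun u => Real.sqrt (w A u) with hs_def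
    set Sd : Matrix (Fin m) (Fin m) ℝ := diagonal s with hSd_def
    have hSS : Sd * Sd = diagonal (w A) := by
      rw [hSd_def, Matrix.diagonal_mul_diagonal]
      exact congrArg diagonal (funext fun u =>
        Real.mul_self_sqrt (inv_pos.mpr (hpos A hA u)).le)
    set Q : Matrix (Fin m) (Fin m) ℝ := Sd * X * Mi A * Xᵀ * Sd with hQ_def
    have hMherm : (M' A)ᵀ = M' A := by
      rw [← conjT_real]
      exact (hMpd A hA).isHermitian
    have hMit : (Mi A)ᵀ = Mi A := by
      rw [hMi_inv A hA, Matrix.transpose_nonsing_inv, hMherm]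
    have hMiM : Mi A * M' A = 1 := by
      rw [hMi_inv A hA]
      exact Matrix.nonsing_inv_mul _ (hMdetpos A hA).ne'.isUnit
    have hQt : Qᵀ = Q := by
      simp only [hQ_def, Matrix.transpose_mul, Matrix.transpose_transpose,
        Matrix.diagonal_transpose, hMit, Matrix.mul_assoc]
      rw [hSd_def]
      simp only [Matrix.diagonal_transpose]
    have hmid : ∀ Z : Matrix (Fin p) (Fin m) ℝ,
        Xᵀ * (diagonal (w A) * (X * Z)) = M' A * Z := by
      intro Z
      rw [← Matrix.mul_assoc, ← Matrix.mul_assoc]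
    have hQQ : Q * Q = Q := by
      simp only [hQ_def, Matrix.mul_assoc]
      rw [← Matrix.mul_assoc Sd Sd, hSS, hmid, ← Matrix.mul_assoc (Mi A) (M' A), hMiM,
        Matrix.one_mul]
    have hRR : ((1 : Matrix (Fin m) (Fin m) ℝ) - Q) * (1 - Q) = 1 - Q := by
      rw [Matrix.sub_mul, Matrix.one_mul, Matrix.mul_sub, Matrix.mul_one, hQQ]
      abel
    have hSQS : Sd * (Q * Sd) = diagonal (w A) * X * Mi A * Xᵀ * diagonal (w A) := by
      simp only [hQ_def, Matrix.mul_assoc]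
      rw [← Matrix.mul_assoc Sd Sd, hSS]
    have hfin : P' A = ((1 - Q) * Sd)ᴴ * ((1 - Q) * Sd) := by
      rw [conjT_real, Matrix.transpose_mul, Matrix.transpose_sub, Matrix.transpose_one, hQt,
        show Sdᵀ = Sd from by rw [hSd_def]; exact Matrix.diagonal_transpose s]
      rw [Matrix.mul_assoc, ← Matrix.mul_assoc (1 - Q) (1 - Q) Sd, hRR]
      rw [Matrix.sub_mul, Matrix.one_mul, Matrix.mul_sub, hSS, hSQS]
    rw [hfin]
    have h2 := (Matrix.posSemidef_conjTranspose_mul_self ((1 - Q) * Sd)).dotProduct_mulVec_nonneg y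
    simpa using h2
  -- measurability of g
  have hgm : Measurable g := by
    rw [hg_def]
    have hwm : ∀ j, Measurable fun A : ℝ => w A j := fun j =>
      ((measurable_id.add_const (D j)).inv)
    have hdiagm : ∀ a b, Measurable fun A : ℝ => diagonal (w A) a b := by
      intro a b
      by_cases hab : a = b
      · simpa [Matrix.diagonal_apply, hab] using hwm b
      · simp [Matrix.diagonal_apply, hab]
    have hXm : ∀ (a : Fin m) (b : Fin p), Measurable fun _ : ℝ => X a b := fun a b =>
      measurable_const
    have hXtm : ∀ (a : Fin p) (b : Fin m), Measurable fun _ : ℝ => Xᵀ a b := fun a b =>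
      measurable_const
    have hM'm : ∀ a b, Measurable fun A : ℝ => M' A a b := by
      intro a b
      exact measurable_entry_mul (measurable_entry_mul hXtm hdiagm) hXm a b
    have hdetm : Measurable fun A : ℝ => (M' A).det := measurable_det' hM'm
    have hMim : ∀ a b, Measurable fun A : ℝ => Mi A a b := by
      intro a b
      simp only [hMi_def, Matrix.smul_apply, smul_eq_mul]
      exact hdetm.inv.mul (measurable_adjugate' hM'm a b)
    have hP'm : ∀ a b, Measurable fun A : ℝ => P' A a b := by
      intro a b
      simp only [hP'_def, Matrix.sub_apply]
      exact (hdiagm a b).sub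
        (measurable_entry_mul (measurable_entry_mul
          (measurable_entry_mul (measurable_entry_mul hdiagm hXm) hMim) hXtm) hdiagm a b)
    have hdotm : Measurable fun A : ℝ => y ⬝ᵥ (P' A).mulVec y := by
      simp only [dotProduct, Matrix.mulVec]
      exact Finset.measurable_sum _ fun a _ =>
        measurable_const.mul (Finset.measurable_sum _ fun b _ => (hP'm a b).mul measurable_const)
    have h1 : Measurable fun A : ℝ => ∑ u : Fin m, ((A + D u) ^ 2)⁻¹ :=
      Finset.measurable_sum _ fun u _ => ((measurable_id.add_const (D u)).pow_const 2).inv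
    have h2 : Measurable fun A : ℝ => (A + D i) ^ 2 :=
      (measurable_id.add_const (D i)).pow_const 2
    have h5 : Measurable fun A : ℝ => (∏ u : Fin m, (A + D u)) ^ (-(1:ℝ)/2) :=
      (Finset.measurable_prod _ fun u _ => measurable_id.add_const (D u)).pow measurable_const
    have h6 : Measurable fun A : ℝ => ((M' A).det) ^ (-(1:ℝ)/2) :=
      hdetm.pow measurable_const
    exact ((((((h1.mul h2).mul measurable_id).mul hfmeas.exp).mul h5).mul h6).mul
      ((hdotm.const_mul (-(1/2))).exp))
  -- exponent, constant
  set r : ℝ := ((m:ℝ) - p - 2)/2 with hr_def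
  have hr1 : (1:ℝ) < r := by
    have h5 : (p:ℝ) + 5 ≤ (m:ℝ) := by exact_mod_cast hm
    rw [hr_def]; linarith
  have hrlt : -r < -1 := by linarith
  set Cst : ℝ := (m:ℝ) * K^2 * (K^((p:ℝ)/2) * xdet ^ (-(1:ℝ)/2)) with hCst_def
  have hCst_nonneg : 0 ≤ Cst := by
    rw [hCst_def]
    have h1 : (0:ℝ) ≤ K^((p:ℝ)/2) := Real.rpow_nonneg hKpos.le _
    have h2 : (0:ℝ) ≤ xdet ^ (-(1:ℝ)/2) := Real.rpow_nonneg hxdet.le _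
    exact mul_nonneg (mul_nonneg (Nat.cast_nonneg m) (sq_nonneg K)) (mul_nonneg h1 h2)
  -- nonnegativity of g
  have hgnn : ∀ A : ℝ, 0 < A → 0 ≤ g A := by
    intro A hA
    rw [hg_def]
    have h5 : (0:ℝ) ≤ (∏ u : Fin m, (A + D u)) ^ (-(1:ℝ)/2) :=
      Real.rpow_nonneg (Finset.prod_nonneg fun u _ => (hpos A hA u).le) _
    have h6 : (0:ℝ) ≤ ((M' A).det) ^ (-(1:ℝ)/2) := Real.rpow_nonneg (hMdetpos A hA).le _
    have h1 : (0:ℝ) ≤ ∑ u : Fin m, ((A + D u)^2)⁻¹ :=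
      Finset.sum_nonneg fun u _ => by positivity
    exact mul_nonneg (mul_nonneg (mul_nonneg (mul_nonneg (mul_nonneg
      (mul_nonneg h1 (sq_nonneg _)) hA.le) (Real.exp_nonneg _)) h5) h6) (Real.exp_nonneg _)
  -- the pointwise bound
  have hbound : ∀ A : ℝ, 0 < A → g A ≤ Cst * (A + dmin) ^ (-r) := by
    intro A hA
    have hx : 0 < A + dmin := by linarith
    have hb1 : (∑ u : Fin m, ((A + D u)^2)⁻¹) ≤ (m:ℝ) * ((A + dmin)^2)⁻¹ := by
      calc (∑ u : Fin m, ((A + D u)^2)⁻¹) ≤ ∑ _u : Fin m, ((A + dmin)^2)⁻¹ := by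
            refine Finset.sum_le_sum fun u _ => ?_
            have h2 : A + dmin ≤ A + D u := by linarith [hdmin_le u]
            exact inv_anti₀ (pow_pos hx 2) (pow_le_pow_left₀ hx.le h2 2)
      _ = (m:ℝ) * ((A + dmin)^2)⁻¹ := by
            rw [Finset.sum_const, Finset.card_univ, Fintype.card_fin, nsmul_eq_mul]
    have hb2 : (A + D i)^2 ≤ (K * (A + dmin))^2 := by
      have h3 : A + D i ≤ K * (A + dmin) := le_trans (by linarith [hDM_ge i]) (hKbound A hA)
      exact pow_le_pow_left₀ (by linarith [hD i]) h3 2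
    have hb3 : A ≤ A + dmin := by linarith
    have hb4 : Real.exp (f A) ≤ 1 := Real.exp_le_one_iff.mpr (hf A hA)
    have hb5 : (∏ u : Fin m, (A + D u)) ^ (-(1:ℝ)/2) ≤ ((A + dmin)^m) ^ (-(1:ℝ)/2) := by
      refine Real.rpow_le_rpow_of_nonpos (pow_pos hx m) ?_ (by norm_num)
      calc ((A + dmin):ℝ)^m = ∏ _u : Fin m, (A + dmin) := by
            rw [Finset.prod_const, Finset.card_univ, Fintype.card_fin]
      _ ≤ ∏ u : Fin m, (A + D u) :=
            Finset.prod_le_prod (fun _ _ => hx.le) (fun u _ => by linarith [hdmin_le u])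
    have hb6 : ((M' A).det) ^ (-(1:ℝ)/2)
        ≤ (K * (A + dmin))^((p:ℝ)/2) * xdet ^ (-(1:ℝ)/2) := by
      have hADM : 0 < A + DM := by linarith
      have s1 : ((M' A).det) ^ (-(1:ℝ)/2) ≤ (((A+DM)⁻¹)^p * xdet) ^ (-(1:ℝ)/2) :=
        Real.rpow_le_rpow_of_nonpos (mul_pos (pow_pos (inv_pos.mpr hADM) p) hxdet)
          (hdetM_ge A hA) (by norm_num)
      have s2 : ((((A+DM)⁻¹)^p * xdet) : ℝ) ^ (-(1:ℝ)/2)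
          = ((A+DM)^((p:ℝ)/2)) * xdet ^ (-(1:ℝ)/2) := by
        rw [Real.mul_rpow (pow_nonneg (inv_pos.mpr hADM).le p) hxdet.le]
        congr 1
        have e : ((A+DM)⁻¹ : ℝ)^p = (A+DM) ^ (-(p:ℝ)) := by
          rw [Real.rpow_neg hADM.le, Real.rpow_natCast, inv_pow]
        rw [e, ← Real.rpow_mul hADM.le]
        congr 1
        ring
      have s3 : ((A+DM):ℝ)^((p:ℝ)/2) ≤ (K * (A + dmin))^((p:ℝ)/2) :=
        Real.rpow_le_rpow hADM.le (hKbound A hA) (div_nonneg (Nat.cast_nonneg p) two_pos.le)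
      calc ((M' A).det) ^ (-(1:ℝ)/2) ≤ (((A+DM)⁻¹)^p * xdet) ^ (-(1:ℝ)/2) := s1
      _ = ((A+DM)^((p:ℝ)/2)) * xdet ^ (-(1:ℝ)/2) := s2
      _ ≤ (K * (A + dmin))^((p:ℝ)/2) * xdet ^ (-(1:ℝ)/2) :=
          mul_le_mul_of_nonneg_right s3 (Real.rpow_nonneg hxdet.le _)
    have hb7 : Real.exp (-(1/2) * (y ⬝ᵥ (P' A).mulVec y)) ≤ 1 := by
      refine Real.exp_le_one_iff.mpr ?_
      have h8 := hPsd A hA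
      linarith [mul_nonneg (by norm_num : (0:ℝ) ≤ 1/2) h8]
    -- nonnegativity accumulators
    have hFx2 : (0:ℝ) ≤ (A + D i)^2 := sq_nonneg _
    have nb1 : (0:ℝ) ≤ (m:ℝ) * ((A + dmin)^2)⁻¹ :=
      mul_nonneg (Nat.cast_nonneg m) (inv_nonneg.mpr (sq_nonneg _))
    have nb2 : (0:ℝ) ≤ (m:ℝ) * ((A + dmin)^2)⁻¹ * (K * (A + dmin))^2 :=
      mul_nonneg nb1 (sq_nonneg _)
    have nb3 : (0:ℝ) ≤ (m:ℝ) * ((A + dmin)^2)⁻¹ * (K * (A + dmin))^2 * (A + dmin) :=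
      mul_nonneg nb2 hx.le
    have nb4 : (0:ℝ) ≤ (m:ℝ) * ((A + dmin)^2)⁻¹ * (K * (A + dmin))^2 * (A + dmin) * 1 :=
      mul_nonneg nb3 zero_le_one
    have nb5 : (0:ℝ) ≤ (m:ℝ) * ((A + dmin)^2)⁻¹ * (K * (A + dmin))^2 * (A + dmin) * 1
        * (((A + dmin)^m) ^ (-(1:ℝ)/2)) :=
      mul_nonneg nb4 (Real.rpow_nonneg (pow_nonneg hx.le m) _)
    have l1 := mul_le_mul hb1 hb2 hFx2 nb1
    have l2 := mul_le_mul l1 hb3 hA.le nb2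
    have l3 := mul_le_mul l2 hb4 (Real.exp_pos _).le nb3
    have l4 := mul_le_mul l3 hb5 (Real.rpow_nonneg
      (Finset.prod_nonneg fun u _ => (hpos A hA u).le) _) nb4
    have l5 := mul_le_mul l4 hb6 (Real.rpow_nonneg (hMdetpos A hA).le _) nb5
    have l6 := mul_le_mul l5 hb7 (Real.exp_pos _).le (mul_nonneg nb5
      (mul_nonneg (Real.rpow_nonneg (mul_nonneg hKpos.le hx.le) _)
        (Real.rpow_nonneg hxdet.le _)))
    have hstep : g A ≤ ((m:ℝ) * ((A + dmin)^2)⁻¹) * ((K * (A + dmin))^2) * (A + dmin) * 1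
        * (((A + dmin)^m) ^ (-(1:ℝ)/2))
        * ((K * (A + dmin))^((p:ℝ)/2) * xdet ^ (-(1:ℝ)/2)) * 1 := by
      rw [hg_def]
      exact l6
    refine le_trans hstep (le_of_eq ?_)
    rw [hCst_def, hr_def]
    exact mp_collapse_eq (A + dmin) K (xdet ^ (-(1:ℝ)/2)) m p hx hKpos.le
  -- integrability
  have hInt1 : IntegrableOn g (Set.Ioc (0:ℝ) 1) := by
    have hconst : IntegrableOn (fun _ : ℝ => Cst * dmin ^ (-r)) (Set.Ioc (0:ℝ) 1) :=
      integrableOn_const measure_Ioc_lt_top.ne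
    refine hconst.mono' hgm.aestronglyMeasurable.restrict ?_
    rw [ae_restrict_iff' measurableSet_Ioc]
    refine Filter.Eventually.of_forall fun A hA => ?_
    have hA0 : 0 < A := hA.1
    rw [Real.norm_eq_abs, abs_of_nonneg (hgnn A hA0)]
    refine le_trans (hbound A hA0) (mul_le_mul_of_nonneg_left ?_ hCst_nonneg)
    exact Real.rpow_le_rpow_of_nonpos hdmin_pos (by linarith) (by linarith)
  have hInt2 : IntegrableOn g (Set.Ioi (1:ℝ)) := by
    have hdom : IntegrableOn (fun A : ℝ => Cst * A ^ (-r)) (Set.Ioi (1:ℝ)) :=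
      (integrableOn_Ioi_rpow_of_lt hrlt one_pos).const_mul Cst
    refine hdom.mono' hgm.aestronglyMeasurable.restrict ?_
    rw [ae_restrict_iff' measurableSet_Ioi]
    refine Filter.Eventually.of_forall fun A hA => ?_
    have hA0 : (0:ℝ) < A := lt_trans one_pos hA
    rw [Real.norm_eq_abs, abs_of_nonneg (hgnn A hA0)]
    refine le_trans (hbound A hA0) (mul_le_mul_of_nonneg_left ?_ hCst_nonneg)
    exact Real.rpow_le_rpow_of_nonpos hA0 (by linarith) (by linarith)
  have hIntg : IntegrableOn g (Set.Ioi (0:ℝ)) := by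
    have h9 := hInt1.union hInt2
    rwa [Set.Ioc_union_Ioi_eq_Ioi zero_le_one] at h9
  refine hIntg.congr_fun ?_ measurableSet_Ioi
  intro A hA
  have hA0 : (0:ℝ) < A := hA
  rw [hg_def]
  simp only
  rw [hMeq A hA0, hPeq A hA0, hV A, Matrix.det_diagonal]
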